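/- A finitely complete category C is a Mal'tsev category (every reflexive internal relation is an equivalence relation) if and only if every internal relation R ⟶ X × Z in C is difunctional, i.e. for generalized elements, (x₁ R z₂ ∧ x₂ R z₂ ∧ x₂ R z₁) implies x₁ R z₁. -/

import Mathlib

open CategoryTheory

/-- An internal relation from `X` to `Z`: a jointly monomorphic span. -/
structure IntRel (C : Type*) [Category C] (X Z : C) where
  R : C
  r1 : R ⟶ X
  r2 : R ⟶ Z
  jointly_mono : ∀ {A : C} (f g : A ⟶ R), f ≫ r1 = g ≫ r1 → f ≫ r2 = g ≫ r2 → f = g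

namespace IntRel

variable {C : Type*} [Category C] {X Z : C}

/-- `(x, z) ∈_A R`: the pair of generalized elements factors through the relation. -/
def mem (S : IntRel C X Z) {A : C} (x : A ⟶ X) (z : A ⟶ Z) : Prop :=
  ∃ h : A ⟶ S.R, h ≫ S.r1 = x ∧ h ≫ S.r2 = z

/-- Difunctionality via generalized elements. -/
def Difunctional (S : IntRel C X Z) : Prop :=
  ∀ {A : C} (x₁ x₂ : A ⟶ X) (z₁ z₂ : A ⟶ Z),
    S.mem x₁ z₂ → S.mem x₂ z₂ → S.mem x₂ z₁ → S.mem x₁ z₁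

/-- A reflexive internal relation on `X`. -/
def Reflexive (S : IntRel C X X) : Prop := ∀ {A : C} (x : A ⟶ X), S.mem x x

/-- A symmetric internal relation on `X`. -/
def Symmetric (S : IntRel C X X) : Prop :=
  ∀ {A : C} (x y : A ⟶ X), S.mem x y → S.mem y x

/-- A transitive internal relation on `X`. -/
def Transitive (S : IntRel C X X) : Prop :=
  ∀ {A : C} (x y z : A ⟶ X), S.mem x y → S.mem y z → S.mem x z

/-- An internal equivalence relation. -/
def IsEquivalence (S : IntRel C X X) : Prop :=
  S.Reflexive ∧ S.Symmetric ∧ S.Transitive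

end IntRel

/-- A finitely complete category is a Mal'tsev category (every internal reflexive
relation is an equivalence relation) if and only if every internal relation is
difunctional. -/
theorem maltsev_iff_difunctional (C : Type*) [Category C] [Limits.HasFiniteLimits C] :
    (∀ (X : C) (S : IntRel C X X), S.Reflexive → S.IsEquivalence) ↔
    (∀ (X Z : C) (S : IntRel C X Z), S.Difunctional) := by
  open Limits in
  constructor
  · intro hM X Z S A x₁ x₂ z₁ z₂ h1 h2 h3
    obtain ⟨a, ha1, ha2⟩ := h1
    obtain ⟨b, hb1, hb2⟩ := h2
    obtain ⟨c, hc1, hc2⟩ := h3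
    let f : S.R ⟶ X ⨯ Z := prod.lift S.r1 S.r2
    let g : S.R ⨯ S.R ⟶ X ⨯ Z := prod.lift (prod.fst ≫ S.r1) (prod.snd ≫ S.r2)
    have cond1 : pullback.fst f g ≫ S.r1 = pullback.snd f g ≫ prod.fst ≫ S.r1 := by
      have h := pullback.condition (f := f) (g := g)
      have := h =≫ prod.fst
      simp only [f, g, Category.assoc] at this
      erw [prod.lift_fst, prod.lift_fst] at this
      exact this
    have cond2 : pullback.fst f g ≫ S.r2 = pullback.snd f g ≫ prod.snd ≫ S.r2 := by
      have h := pullback.condition (f := f) (g := g)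
      have := h =≫ prod.snd
      simp only [f, g, Category.assoc] at this
      erw [prod.lift_snd, prod.lift_snd] at this
      exact this
    let E : IntRel C S.R S.R :=
      { R := pullback f g
        r1 := pullback.snd f g ≫ prod.fst
        r2 := pullback.snd f g ≫ prod.snd
        jointly_mono := by
          intro B u v e1 e2
          have hw : u ≫ pullback.fst f g = v ≫ pullback.fst f g := by
            apply S.jointly_mono
            · rw [Category.assoc, Category.assoc, cond1, ← Category.assoc, ← Category.assoc,
                ← Category.assoc, ← Category.assoc, Category.assoc u, Category.assoc v, e1]
            · rw [Category.assoc, Category.assoc, cond2, ← Category.assoc, ← Category.assoc,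
                ← Category.assoc, ← Category.assoc, Category.assoc u, Category.assoc v, e2]
          have hpq : u ≫ pullback.snd f g = v ≫ pullback.snd f g := by
            apply Limits.prod.hom_ext
            · simpa using e1
            · simpa using e2
          exact pullback.hom_ext (by simpa using hw) (by simpa using hpq) }
    -- membership lemmas
    have memE : ∀ (u v : A ⟶ S.R), (∃ w : A ⟶ S.R,
        w ≫ S.r1 = u ≫ S.r1 ∧ w ≫ S.r2 = v ≫ S.r2) → E.mem u v := by
      rintro u v ⟨w, hw1, hw2⟩
      refine ⟨pullback.lift w (prod.lift u v) ?_, ?_, ?_⟩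
      · apply Limits.prod.hom_ext <;> simp [f, g, hw1, hw2]
      · simp [E]; erw [pullback.lift_snd_assoc, prod.lift_fst]
      · simp [E]; erw [pullback.lift_snd_assoc, prod.lift_snd]
    have memE' : ∀ (u v : A ⟶ S.R), E.mem u v → (∃ w : A ⟶ S.R,
        w ≫ S.r1 = u ≫ S.r1 ∧ w ≫ S.r2 = v ≫ S.r2) := by
      rintro u v ⟨h, hu, hv⟩
      refine ⟨h ≫ pullback.fst f g, ?_, ?_⟩
      · rw [Category.assoc, cond1, ← Category.assoc, ← hu]; simp [E]
      · rw [Category.assoc, cond2, ← Category.assoc, ← hv]; simp [E]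
    have hrefl : E.Reflexive := by
      intro B u
      refine ⟨pullback.lift u (prod.lift u u) ?_, ?_, ?_⟩
      · apply Limits.prod.hom_ext <;> simp [f, g]
      · simp [E]; erw [pullback.lift_snd_assoc, prod.lift_fst]
      · simp [E]; erw [pullback.lift_snd_assoc, prod.lift_snd]
    obtain ⟨-, -, htrans⟩ := hM S.R E hrefl
    have hab : E.mem a b := memE a b ⟨a, rfl, by rw [ha2, hb2]⟩
    have hbc : E.mem b c := memE b c ⟨c, by rw [hc1, hb1], rfl⟩
    obtain ⟨w, hw1, hw2⟩ := memE' a c (htrans a b c hab hbc)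
    exact ⟨w, by rw [hw1, ha1], by rw [hw2, hc2]⟩
  · intro hD X S hrefl
    refine ⟨hrefl, ?_, ?_⟩
    · intro A x y hxy
      exact hD X X S y x x y (hrefl y) hxy (hrefl x)
    · intro A x y z hxy hyz
      exact hD X X S x y z y hxy (hrefl y) hyz
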